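/- Let λ ∈ ℝ and let z, ρ : ℝ² → ℝ be smooth (C^∞) functions of (x,t) satisfying z_t = −6 z z_x − z_xxx, ρ_x = −ρ² − z − λ, and ρ_t = −2(2λ − z)ρ² − 2 z_x ρ + z_xx + 2z² − 2λz − 4λ². Then z' := −z − 2ρ² − 2λ satisfies the KdV equation z'_t = −6 z' z'_x − z'_xxx. -/

import Mathlib

/-- Partial derivative in the first variable `x`. -/
noncomputable def px (f : ℝ → ℝ → ℝ) : ℝ → ℝ → ℝ := fun x t => deriv (fun y => f y t) x

/-- Partial derivative in the second variable `t`. -/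
noncomputable def pt (f : ℝ → ℝ → ℝ) : ℝ → ℝ → ℝ := fun x t => deriv (fun s => f x s) t

lemma px_eq_fderiv (f : ℝ → ℝ → ℝ) (hf : ContDiff ℝ (⊤ : ℕ∞) (Function.uncurry f)) :
    ∀ x t, px f x t = fderiv ℝ (Function.uncurry f) (x, t) (1, 0) := by
  intro x t
  have hF : HasFDerivAt (Function.uncurry f) (fderiv ℝ (Function.uncurry f) (x, t)) (x, t) :=
    ((hf.differentiable (by simp)) (x, t)).hasFDerivAt
  have hg : HasFDerivAt (fun y : ℝ => (y, t)) ((ContinuousLinearMap.id ℝ ℝ).prod 0) x :=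
    (hasFDerivAt_id x).prodMk (hasFDerivAt_const t x)
  have h := (hF.comp x hg).hasDerivAt
  have h2 : px f x t
      = ((fderiv ℝ (Function.uncurry f) (x, t)).comp
          ((ContinuousLinearMap.id ℝ ℝ).prod 0)) 1 := h.deriv
  simpa using h2

lemma contDiff_px (f : ℝ → ℝ → ℝ) (hf : ContDiff ℝ (⊤ : ℕ∞) (Function.uncurry f)) :
    ContDiff ℝ (⊤ : ℕ∞) (Function.uncurry (px f)) := by
  have h : Function.uncurry (px f)
      = fun p : ℝ × ℝ => fderiv ℝ (Function.uncurry f) p (1, 0) :=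
    funext fun ⟨a, b⟩ => px_eq_fderiv f hf a b
  rw [h]
  exact (hf.fderiv_right (by exact_mod_cast le_top)).clm_apply contDiff_const

lemma hdx (f : ℝ → ℝ → ℝ) (hf : ContDiff ℝ (⊤ : ℕ∞) (Function.uncurry f)) (x t : ℝ) :
    HasDerivAt (fun y => f y t) (px f x t) x := by
  have h : DifferentiableAt ℝ (fun y => f y t) x := by
    have he : (fun y => f y t) = Function.uncurry f ∘ fun y => (y, t) := rfl
    rw [he]
    exact ((hf.comp (contDiff_id.prodMk contDiff_const)).differentiable (by simp)).differentiableAt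
  exact h.hasDerivAt

lemma hdt (f : ℝ → ℝ → ℝ) (hf : ContDiff ℝ (⊤ : ℕ∞) (Function.uncurry f)) (x t : ℝ) :
    HasDerivAt (fun s => f x s) (pt f x t) t := by
  have h : DifferentiableAt ℝ (fun s => f x s) t := by
    have he : (fun s => f x s) = Function.uncurry f ∘ fun s => (x, s) := rfl
    rw [he]
    exact ((hf.comp (contDiff_const.prodMk contDiff_id)).differentiable (by simp)).differentiableAt
  exact h.hasDerivAt

/-- the auto-Bäcklund transformation `z' = −z − 2ρ² − 2λ` of KdV:
if `z` solves KdV and `ρ` solves the associated Riccati covering, then `z'` solves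
KdV again. -/
theorem kdv_auto_backlund (lam : ℝ) (z ρ : ℝ → ℝ → ℝ)
    (hz : ContDiff ℝ (⊤ : ℕ∞) (Function.uncurry z))
    (hρ : ContDiff ℝ (⊤ : ℕ∞) (Function.uncurry ρ))
    (hkdv : ∀ x t, pt z x t = -6 * z x t * px z x t - px (px (px z)) x t)
    (hρx : ∀ x t, px ρ x t = -(ρ x t) ^ 2 - z x t - lam)
    (hρt : ∀ x t, pt ρ x t
      = -2 * (2 * lam - z x t) * (ρ x t) ^ 2 - 2 * px z x t * ρ x t
        + px (px z) x t + 2 * (z x t) ^ 2 - 2 * lam * z x t - 4 * lam ^ 2) :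
    ∀ x t,
      pt (fun x t => -z x t - 2 * (ρ x t) ^ 2 - 2 * lam) x t
        = -6 * (-z x t - 2 * (ρ x t) ^ 2 - 2 * lam)
            * px (fun x t => -z x t - 2 * (ρ x t) ^ 2 - 2 * lam) x t
          - px (px (px (fun x t => -z x t - 2 * (ρ x t) ^ 2 - 2 * lam))) x t := by
  have hz1 : ContDiff ℝ (⊤ : ℕ∞) (Function.uncurry (px z)) := contDiff_px z hz
  have hz2 : ContDiff ℝ (⊤ : ℕ∞) (Function.uncurry (px (px z))) := contDiff_px (px z) hz1
  -- first x-derivative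
  have hA1 : ∀ x t, px (fun x t => -z x t - 2 * (ρ x t) ^ 2 - 2 * lam) x t
      = -px z x t + 4 * (ρ x t) ^ 3 + 4 * (ρ x t * z x t) + 4 * lam * ρ x t := by
    intro x t
    have h1 := hdx z hz x t
    have h2 := hdx ρ hρ x t
    have h := ((h1.neg.sub ((h2.pow 2).const_mul 2)).sub_const (2 * lam))
    have hval : -px z x t - 2 * ((2 : ℕ) * ρ x t ^ (2 - 1) * px ρ x t)
        = -px z x t + 4 * (ρ x t) ^ 3 + 4 * (ρ x t * z x t) + 4 * lam * ρ x t := by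
      rw [hρx x t]; push_cast; ring
    exact (hval ▸ h).deriv
  -- second x-derivative
  have hA2 : ∀ x t, px (px (fun x t => -z x t - 2 * (ρ x t) ^ 2 - 2 * lam)) x t
      = -px (px z) x t + 4 * (px z x t * ρ x t) - 12 * (ρ x t) ^ 4
        - 16 * (z x t * (ρ x t) ^ 2) - 4 * (z x t) ^ 2 - 16 * lam * (ρ x t) ^ 2
        - 8 * lam * z x t - 4 * lam ^ 2 := by
    intro x t
    show deriv (fun y => px (fun x t => -z x t - 2 * (ρ x t) ^ 2 - 2 * lam) y t) x = _
    simp only [hA1]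
    have h1 := hdx (px z) hz1 x t
    have h2 := hdx ρ hρ x t
    have h3 := hdx z hz x t
    have h := ((h1.neg.add ((h2.pow 3).const_mul 4)).add ((h2.mul h3).const_mul 4)).add
      (h2.const_mul (4 * lam))
    have hval : -px (px z) x t + 4 * ((3 : ℕ) * ρ x t ^ (3 - 1) * px ρ x t)
          + 4 * (px ρ x t * z x t + ρ x t * px z x t) + 4 * lam * px ρ x t
        = -px (px z) x t + 4 * (px z x t * ρ x t) - 12 * (ρ x t) ^ 4
          - 16 * (z x t * (ρ x t) ^ 2) - 4 * (z x t) ^ 2 - 16 * lam * (ρ x t) ^ 2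
          - 8 * lam * z x t - 4 * lam ^ 2 := by
      rw [hρx x t]; push_cast; ring
    exact (hval ▸ h).deriv
  -- third x-derivative
  have hA3 : ∀ x t, px (px (px (fun x t => -z x t - 2 * (ρ x t) ^ 2 - 2 * lam))) x t
      = -px (px (px z)) x t + 4 * px (px z) x t * ρ x t - 20 * px z x t * (ρ x t) ^ 2
        - 12 * lam * px z x t - 12 * z x t * px z x t + 48 * (ρ x t) ^ 5
        + 80 * z x t * (ρ x t) ^ 3 + 80 * lam * (ρ x t) ^ 3 + 32 * (z x t) ^ 2 * ρ x t
        + 64 * lam * z x t * ρ x t + 32 * lam ^ 2 * ρ x t := by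
    intro x t
    show deriv (fun y => px (px (fun x t => -z x t - 2 * (ρ x t) ^ 2 - 2 * lam)) y t) x = _
    simp only [hA2]
    have h1 := hdx (px (px z)) hz2 x t
    have h1' := hdx (px z) hz1 x t
    have h2 := hdx ρ hρ x t
    have h3 := hdx z hz x t
    have h := (((((((h1.neg.add ((h1'.mul h2).const_mul 4)).sub
      ((h2.pow 4).const_mul 12)).sub ((h3.mul (h2.pow 2)).const_mul 16)).sub
      ((h3.pow 2).const_mul 4)).sub ((h2.pow 2).const_mul (16 * lam))).sub
      (h3.const_mul (8 * lam))).sub_const (4 * lam ^ 2))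
    have hval : -px (px (px z)) x t + 4 * (px (px z) x t * ρ x t + px z x t * px ρ x t)
          - 12 * ((4 : ℕ) * ρ x t ^ (4 - 1) * px ρ x t)
          - 16 * (px z x t * ρ x t ^ 2 + z x t * ((2 : ℕ) * ρ x t ^ (2 - 1) * px ρ x t))
          - 4 * ((2 : ℕ) * z x t ^ (2 - 1) * px z x t)
          - 16 * lam * ((2 : ℕ) * ρ x t ^ (2 - 1) * px ρ x t) - 8 * lam * px z x t
        = -px (px (px z)) x t + 4 * px (px z) x t * ρ x t - 20 * px z x t * (ρ x t) ^ 2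
          - 12 * lam * px z x t - 12 * z x t * px z x t + 48 * (ρ x t) ^ 5
          + 80 * z x t * (ρ x t) ^ 3 + 80 * lam * (ρ x t) ^ 3 + 32 * (z x t) ^ 2 * ρ x t
          + 64 * lam * z x t * ρ x t + 32 * lam ^ 2 * ρ x t := by
      rw [hρx x t]; push_cast; ring
    exact (hval ▸ h).deriv
  -- t-derivative
  have hAt : ∀ x t, pt (fun x t => -z x t - 2 * (ρ x t) ^ 2 - 2 * lam) x t
      = px (px (px z)) x t - 4 * px (px z) x t * ρ x t + 8 * px z x t * (ρ x t) ^ 2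
        + 6 * z x t * px z x t - 8 * (z x t) ^ 2 * ρ x t - 8 * z x t * (ρ x t) ^ 3
        + 16 * lam * (ρ x t) ^ 3 + 8 * lam * z x t * ρ x t + 16 * lam ^ 2 * ρ x t := by
    intro x t
    have h1 := hdt z hz x t
    have h2 := hdt ρ hρ x t
    have h := ((h1.neg.sub ((h2.pow 2).const_mul 2)).sub_const (2 * lam))
    have hval : -pt z x t - 2 * ((2 : ℕ) * ρ x t ^ (2 - 1) * pt ρ x t)
        = px (px (px z)) x t - 4 * px (px z) x t * ρ x t + 8 * px z x t * (ρ x t) ^ 2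
          + 6 * z x t * px z x t - 8 * (z x t) ^ 2 * ρ x t - 8 * z x t * (ρ x t) ^ 3
          + 16 * lam * (ρ x t) ^ 3 + 8 * lam * z x t * ρ x t + 16 * lam ^ 2 * ρ x t := by
      rw [hkdv x t, hρt x t]; push_cast; ring
    exact (hval ▸ h).deriv
  intro x t
  rw [hAt x t, hA1 x t, hA3 x t]
  ring
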